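/- arXiv:2311.05913 — 4 statements merged into one kernel-verified Lean document; each statement's English description precedes it below -/
import Mathlib

section
/- If G has a connected embedding of depth d into H, and H has a connected embedding of depth d' into K, then G has a connected embedding of depth at most d·d' into K, obtained by mapping each vertex v of G to the union of the images of the vertices in Ψ(v). -/
open Finset

/-- Two subgraphs (given by vertex sets) of `H` touch if they share a vertex or are
joined by an edge of `H`. -/
def Touches {V : Type*} (H : SimpleGraph V) (S T : Set V) : Prop :=
  (S ∩ T).Nonempty ∨ ∃ a ∈ S, ∃ b ∈ T, H.Adj a b

/-- `Ψ` is a connected embedding of `G` into `H`: each image is nonempty and induces a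
connected subgraph of `H`, and images of adjacent vertices touch. -/
def IsConnEmbedding {V X : Type*} (G : SimpleGraph V) (H : SimpleGraph X)
    (Ψ : V → Finset X) : Prop :=
  (∀ v, (Ψ v).Nonempty) ∧ (∀ v, (H.induce (Ψ v : Set X)).Connected) ∧
  (∀ u v, G.Adj u v → Touches H (Ψ u) (Ψ v))

/-- The embedding `Ψ` has depth at most `d`: every vertex of the host graph lies in at
most `d` of the sets `Ψ v`. -/
def DepthLE {V X : Type*} [Fintype V] [DecidableEq X] (Ψ : V → Finset X) (d : ℕ) : Prop :=
  ∀ x : X, (Finset.univ.filter (fun v => x ∈ Ψ v)).card ≤ d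

lemma conn_biUnion {X Y : Type*} [DecidableEq Y] (H : SimpleGraph X) (K : SimpleGraph Y)
    (Ψ' : X → Finset Y) (h2 : IsConnEmbedding H K Ψ')
    (s : Finset X) (hne : s.Nonempty) (hc : (H.induce (s : Set X)).Connected) :
    (K.induce (↑(s.biUnion Ψ') : Set Y)).Connected := by
  set T : Set Y := ↑(s.biUnion Ψ') with hT
  have hmem : ∀ {x : X}, x ∈ s → ∀ {a : Y}, a ∈ Ψ' x → a ∈ T := by
    intro x hx a ha
    simp only [hT, Finset.coe_biUnion, Set.mem_iUnion, Finset.mem_coe]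
    exact ⟨x, hx, ha⟩
  have step1 : ∀ x (hx : x ∈ s) a (ha : a ∈ Ψ' x) b (hb : b ∈ Ψ' x),
      (K.induce T).Reachable ⟨a, hmem hx ha⟩ ⟨b, hmem hx hb⟩ := by
    intro x hx a ha b hb
    have h := (h2.2.1 x).preconnected ⟨a, ha⟩ ⟨b, hb⟩
    exact h.map (⟨fun p => ⟨p.1, hmem hx p.2⟩, fun h => h⟩ : K.induce (↑(Ψ' x) : Set Y) →g K.induce T)
  have step2 : ∀ x (hx : x ∈ s) y (hy : y ∈ s), H.Adj x y →
      ∀ a (ha : a ∈ Ψ' x) b (hb : b ∈ Ψ' y),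
      (K.induce T).Reachable ⟨a, hmem hx ha⟩ ⟨b, hmem hy hb⟩ := by
    intro x hx y hy hxy a ha b hb
    rcases h2.2.2 x y hxy with ⟨c, hcx, hcy⟩ | ⟨p, hp, q, hq, hpq⟩
    · have hcx : c ∈ Ψ' x := hcx
      have hcy : c ∈ Ψ' y := hcy
      exact (step1 x hx a ha c hcx).trans (step1 y hy c hcy b hb)
    · have hp : p ∈ Ψ' x := hp
      have hq : q ∈ Ψ' y := hq
      have hadj : (K.induce T).Adj ⟨p, hmem hx hp⟩ ⟨q, hmem hy hq⟩ := hpq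
      exact ((step1 x hx a ha p hp).trans hadj.reachable).trans (step1 y hy q hq b hb)
  have step3 : ∀ (x : (s : Set X)) (y : (s : Set X)),
      (H.induce (s : Set X)).Walk x y →
      ∀ a (ha : a ∈ Ψ' x.1) b (hb : b ∈ Ψ' y.1),
      (K.induce T).Reachable ⟨a, hmem x.2 ha⟩ ⟨b, hmem y.2 hb⟩ := by
    intro x y w
    induction w with
    | @nil u => intro a ha b hb; exact step1 u.1 (Finset.mem_coe.mp u.2) a ha b hb
    | @cons u z y h w ih =>
      intro a ha b hb
      obtain ⟨c, hc⟩ := h2.1 z.1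
      exact (step2 u.1 (Finset.mem_coe.mp u.2) z.1 (Finset.mem_coe.mp z.2) h a ha c hc).trans (ih c hc b hb)
  rw [SimpleGraph.connected_iff]
  refine ⟨?_, ?_⟩
  · rintro ⟨a, ha⟩ ⟨b, hb⟩
    have ha' : a ∈ s.biUnion Ψ' := ha
    have hb' : b ∈ s.biUnion Ψ' := hb
    obtain ⟨x, hx, hax⟩ := Finset.mem_biUnion.mp ha'
    obtain ⟨y, hy, hby⟩ := Finset.mem_biUnion.mp hb'
    exact (hc.preconnected ⟨x, hx⟩ ⟨y, hy⟩).elim fun w => step3 ⟨x, hx⟩ ⟨y, hy⟩ w a hax b hby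
  · obtain ⟨x, hx⟩ := hne
    obtain ⟨a, ha⟩ := h2.1 x
    exact ⟨⟨a, hmem hx ha⟩⟩

/-- Composition of connected embeddings: if `G` embeds into `H` with depth `d` and `H`
embeds into `K` with depth `d'`, then `v ↦ ⋃_{u ∈ Ψ(v)} Ψ'(u)` is a connected embedding
of `G` into `K` of depth at most `d · d'`. -/
theorem stmt_10 {V X Y : Type*} [Fintype V] [Fintype X] [DecidableEq X] [DecidableEq Y]
    (G : SimpleGraph V) (H : SimpleGraph X) (K : SimpleGraph Y)
    (Ψ : V → Finset X) (Ψ' : X → Finset Y) (d d' : ℕ)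
    (h1 : IsConnEmbedding G H Ψ) (h2 : IsConnEmbedding H K Ψ')
    (hd : DepthLE Ψ d) (hd' : DepthLE Ψ' d') :
    IsConnEmbedding G K (fun v => (Ψ v).biUnion Ψ') ∧
      DepthLE (fun v => (Ψ v).biUnion Ψ') (d * d') := by
  constructor
  · refine ⟨?_, ?_, ?_⟩
    · intro v
      obtain ⟨x, hx⟩ := h1.1 v
      obtain ⟨a, ha⟩ := h2.1 x
      exact ⟨a, Finset.mem_biUnion.mpr ⟨x, hx, ha⟩⟩
    · intro v
      exact conn_biUnion H K Ψ' h2 (Ψ v) (h1.1 v) (h1.2.1 v)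
    · intro u v huv
      rcases h1.2.2 u v huv with ⟨x, hxu, hxv⟩ | ⟨x, hx, y, hy, hxy⟩
      · have hxu : x ∈ Ψ u := hxu
        have hxv : x ∈ Ψ v := hxv
        obtain ⟨a, ha⟩ := h2.1 x
        exact Or.inl ⟨a, Finset.mem_biUnion.mpr ⟨x, hxu, ha⟩,
          Finset.mem_biUnion.mpr ⟨x, hxv, ha⟩⟩
      · have hx : x ∈ Ψ u := hx
        have hy : y ∈ Ψ v := hy
        rcases h2.2.2 x y hxy with ⟨c, hcx, hcy⟩ | ⟨p, hp, q, hq, hpq⟩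
        · exact Or.inl ⟨c, Finset.mem_biUnion.mpr ⟨x, hx, hcx⟩,
            Finset.mem_biUnion.mpr ⟨y, hy, hcy⟩⟩
        · exact Or.inr ⟨p, Finset.mem_biUnion.mpr ⟨x, hx, hp⟩,
            q, Finset.mem_biUnion.mpr ⟨y, hy, hq⟩, hpq⟩
  · intro y
    classical
    have hsub : (Finset.univ.filter (fun v => y ∈ (Ψ v).biUnion Ψ')) ⊆
        (Finset.univ.filter (fun x => y ∈ Ψ' x)).biUnion
          (fun x => Finset.univ.filter (fun v => x ∈ Ψ v)) := by
      intro v hv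
      simp only [Finset.mem_filter, Finset.mem_biUnion, Finset.mem_univ, true_and] at hv ⊢
      obtain ⟨x, hx, hy⟩ := hv
      exact ⟨x, hy, hx⟩
    calc (Finset.univ.filter (fun v => y ∈ (Ψ v).biUnion Ψ')).card
        ≤ ((Finset.univ.filter (fun x => y ∈ Ψ' x)).biUnion
            (fun x => Finset.univ.filter (fun v => x ∈ Ψ v))).card :=
          Finset.card_le_card hsub
      _ ≤ ∑ x ∈ Finset.univ.filter (fun x => y ∈ Ψ' x),
            (Finset.univ.filter (fun v => x ∈ Ψ v)).card := Finset.card_biUnion_le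
      _ ≤ ∑ x ∈ Finset.univ.filter (fun x => y ∈ Ψ' x), d :=
          Finset.sum_le_sum fun x _ => hd x
      _ = (Finset.univ.filter (fun x => y ∈ Ψ' x)).card * d := by
          rw [Finset.sum_const, smul_eq_mul]
      _ ≤ d' * d := Nat.mul_le_mul_right d (hd' y)
      _ = d * d' := Nat.mul_comm d' d
end

section
/- (Completeness of the CSP embedding reduction) Let Γ be a 2-CSP with constraint graph G(V,E) and alphabet Σ, let H(X,F) be a simple graph with no isolated vertices, let Ψ : V → P(X) be a connected embedding of G into H of depth d, and let Φ be the 2-CSP with constraint graph H and alphabet Σ^d defined by the vertex-consistency and edge-consistency constraints induced by Ψ. If Γ has a satisfying assignment σ, then the assignment x ↦ (σ(π_x⁻¹(i)) for i ≤ d_x, arbitrary otherwise) satisfies Φ. -/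
open Finset

/-- `Vx Ψ x` is the set of variables `v` with `x ∈ Ψ v`. -/
def Vx {V X : Type*} [Fintype V] [DecidableEq X] (Ψ : V → Finset X) (x : X) : Finset V :=
  Finset.univ.filter (fun v => x ∈ Ψ v)

/-- The constraint `C̃_{xy}` of the reduced CSP `Φ` on values `a, b : Fin d → A`:
vertex consistency on `V_x ∩ V_y` and edge consistency for edges between `V_x` and `V_y`,
inside `V_x`, and inside `V_y`. -/
def Ctilde {V X A : Type*} [Fintype V] [DecidableEq X]
    (G : SimpleGraph V) (C : V → V → Set (A × A)) (Ψ : V → Finset X) {d : ℕ}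
    (π : X → V → Fin d) (x y : X) (a b : Fin d → A) : Prop :=
  (∀ v, x ∈ Ψ v → y ∈ Ψ v → a (π x v) = b (π y v)) ∧
  (∀ u v, G.Adj u v → x ∈ Ψ u → y ∈ Ψ v → (a (π x u), b (π y v)) ∈ C u v) ∧
  (∀ u u', G.Adj u u' → x ∈ Ψ u → x ∈ Ψ u' → (a (π x u), a (π x u')) ∈ C u u') ∧
  (∀ v v', G.Adj v v' → y ∈ Ψ v → y ∈ Ψ v' → (b (π y v), b (π y v')) ∈ C v v')

/-- Completeness of the CSP embedding reduction: if `σ` satisfies `Γ`, then the padded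
assignment `x ↦ (i ↦ σ(π_x⁻¹ i)` for `i < d_x`, `α` otherwise`)` satisfies every
constraint of `Φ`. Here `π x` (with partial inverse `ρ x`) plays the role of the
bijection `π_x : V_x → {1,…,d_x}`, and `Ψ` is a connected embedding of depth at most
`d`. -/
theorem stmt_15 {V X A : Type*} [Fintype V] [Fintype X] [DecidableEq V] [DecidableEq X]
    (G : SimpleGraph V) (H : SimpleGraph X)
    (C : V → V → Set (A × A))
    (Ψ : V → Finset X) (d : ℕ)
    (hne : ∀ v, (Ψ v).Nonempty)
    (hconn : ∀ v, (H.induce (Ψ v : Set X)).Connected)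
    (htouch : ∀ u v, G.Adj u v →
      ((↑(Ψ u) ∩ ↑(Ψ v) : Set X).Nonempty ∨ ∃ a ∈ Ψ u, ∃ b ∈ Ψ v, H.Adj a b))
    (hdepth : ∀ x, (Vx Ψ x).card ≤ d)
    (π : X → V → Fin d) (ρ : X → Fin d → V)
    (hπρ : ∀ x v, x ∈ Ψ v → ρ x (π x v) = v)
    (hπlt : ∀ x v, x ∈ Ψ v → (π x v).val < (Vx Ψ x).card)
    (hρ : ∀ x (i : Fin d), i.val < (Vx Ψ x).card → x ∈ Ψ (ρ x i) ∧ π x (ρ x i) = i)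
    (σ : V → A) (hσ : ∀ u v, G.Adj u v → (σ u, σ v) ∈ C u v)
    (α : A) (σ' : X → Fin d → A)
    (hσ' : σ' = fun x i => if i.val < (Vx Ψ x).card then σ (ρ x i) else α) :
    ∀ x y, H.Adj x y → Ctilde G C Ψ π x y (σ' x) (σ' y) := by
  subst hσ'
  have key : ∀ x v, x ∈ Ψ v →
      (if (π x v).val < (Vx Ψ x).card then σ (ρ x (π x v)) else α) = σ v := by
    intro x v hx
    rw [if_pos (hπlt x v hx), hπρ x v hx]
  intro x y _
  refine ⟨fun v hx hy => by simp only; rw [key x v hx, key y v hy],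
    fun u v huv hx hy => by simp only; rw [key x u hx, key y v hy]; exact hσ u v huv,
    fun u u' huu hx hx' => by simp only; rw [key x u hx, key x u' hx']; exact hσ u u' huu,
    fun v v' hvv hy hy' => by simp only; rw [key y v hy, key y v' hy']; exact hσ v v' hvv⟩
end

section
/- (Soundness of the CSP embedding reduction) With the setup of the CSP embedding reduction, if σ̃ : X → Σ^d is a satisfying assignment of Φ, then for every v ∈ V the value σ̃(x)_{π_x(v)} is the same for all x ∈ Ψ(v), and the assignment σ(v) := σ̃(x)_{π_x(v)} (for any x ∈ Ψ(v)) is a satisfying assignment of Γ. -/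
open Finset

/-- Soundness of the CSP embedding reduction: if `σ'` satisfies `Φ` (with `H` simple
without isolated vertices and `Ψ` a connected embedding of depth at most `d`), then for
every variable `v` the value `σ'(x)_{π_x(v)}` is the same for every `x ∈ Ψ v`, and the
resulting assignment `σ(v) := σ'(x)_{π_x(v)}` satisfies every constraint of `Γ`. -/
theorem stmt_16 {V X A : Type*} [Fintype V] [Fintype X] [DecidableEq V] [DecidableEq X]
    (G : SimpleGraph V) (H : SimpleGraph X)
    (C : V → V → Set (A × A))
    (Ψ : V → Finset X) (d : ℕ)
    (hiso : ∀ x : X, ∃ y, H.Adj x y)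
    (hne : ∀ v, (Ψ v).Nonempty)
    (hconn : ∀ v, (H.induce (Ψ v : Set X)).Connected)
    (htouch : ∀ u v, G.Adj u v →
      ((↑(Ψ u) ∩ ↑(Ψ v) : Set X).Nonempty ∨ ∃ a ∈ Ψ u, ∃ b ∈ Ψ v, H.Adj a b))
    (hdepth : ∀ x, (Vx Ψ x).card ≤ d)
    (π : X → V → Fin d)
    (hπinj : ∀ x, Set.InjOn (π x) {v | x ∈ Ψ v})
    (σ' : X → Fin d → A)
    (hσ' : ∀ x y, H.Adj x y → Ctilde G C Ψ π x y (σ' x) (σ' y)) :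
    (∀ v, ∀ x ∈ Ψ v, ∀ x' ∈ Ψ v, σ' x (π x v) = σ' x' (π x' v)) ∧
    (∀ u v, G.Adj u v → ∀ x ∈ Ψ u, ∀ y ∈ Ψ v,
      (σ' x (π x u), σ' y (π y v)) ∈ C u v) := by
  have key : ∀ v, ∀ x ∈ Ψ v, ∀ x' ∈ Ψ v, σ' x (π x v) = σ' x' (π x' v) := by
    intro v x hx x' hx'
    suffices h : ∀ (a b : (↑(Ψ v) : Set X)),
        (H.induce (↑(Ψ v) : Set X)).Reachable a b →
        σ' a.1 (π a.1 v) = σ' b.1 (π b.1 v) from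
      h ⟨x, hx⟩ ⟨x', hx'⟩ ((hconn v).preconnected _ _)
    rintro a b ⟨p⟩
    induction p with
    | nil => rfl
    | cons h p ih =>
      rename_i c w _
      exact ((hσ' c.1 w.1 h).1 v c.2 w.2).trans ih
  refine ⟨key, ?_⟩
  intro u v huv x hx y hy
  rcases htouch u v huv with ⟨z, hzu, hzv⟩ | ⟨a, ha, b, hb, hab⟩
  · obtain ⟨w, hw⟩ := hiso z
    have := (hσ' z w hw).2.2.1 u v huv hzu hzv
    rwa [key u z hzu x hx, key v z hzv y hy] at this
  · have := (hσ' a b hab).2.1 u v huv ha hb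
    rwa [key u a ha x hx, key v b hb y hy] at this
end

section
/- Let Γ be a 2-CSP with constraint graph G, and let Φ be the 2-CSP obtained from Γ via a connected embedding Ψ of G into H of depth d using the vertex-consistency/edge-consistency construction (H simple, no isolated vertices). Then there is a bijection between satisfying assignments of Γ and satisfying assignments σ̃ of Φ that additionally satisfy σ̃(x)_i = α for all x ∈ X and d_x < i ≤ d, where α ∈ Σ is a fixed padding symbol. -/
open Finset

/-- There is a bijection between satisfying assignments of `Γ` and those satisfying
assignments of the reduced CSP `Φ` which are padded with the fixed symbol `α` on the
coordinates `d_x < i ≤ d` (here `H` is simple without isolated vertices and `Ψ` is a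
connected embedding of `G` into `H` of depth at most `d`, with coordinate bijections
`π_x` and partial inverses `ρ_x`). -/
theorem stmt_19 {V X A : Type*} [Fintype V] [Fintype X] [DecidableEq V] [DecidableEq X]
    (G : SimpleGraph V) (H : SimpleGraph X)
    (C : V → V → Set (A × A))
    (Ψ : V → Finset X) (d : ℕ)
    (hiso : ∀ x : X, ∃ y, H.Adj x y)
    (hne : ∀ v, (Ψ v).Nonempty)
    (hconn : ∀ v, (H.induce (Ψ v : Set X)).Connected)
    (htouch : ∀ u v, G.Adj u v →
      ((↑(Ψ u) ∩ ↑(Ψ v) : Set X).Nonempty ∨ ∃ a ∈ Ψ u, ∃ b ∈ Ψ v, H.Adj a b))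
    (hdepth : ∀ x, (Vx Ψ x).card ≤ d)
    (π : X → V → Fin d) (ρ : X → Fin d → V)
    (hπρ : ∀ x v, x ∈ Ψ v → ρ x (π x v) = v)
    (hπlt : ∀ x v, x ∈ Ψ v → (π x v).val < (Vx Ψ x).card)
    (hρ : ∀ x (i : Fin d), i.val < (Vx Ψ x).card → x ∈ Ψ (ρ x i) ∧ π x (ρ x i) = i)
    (α : A) :
    Nonempty
      ({σ : V → A // ∀ u v, G.Adj u v → (σ u, σ v) ∈ C u v} ≃
        {σ' : X → Fin d → A //
          (∀ x y, H.Adj x y → Ctilde G C Ψ π x y (σ' x) (σ' y)) ∧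
          (∀ x (i : Fin d), (Vx Ψ x).card ≤ i.val → σ' x i = α)}) := by
  classical
  have key : ∀ (σ' : X → Fin d → A),
      (∀ x y, H.Adj x y → Ctilde G C Ψ π x y (σ' x) (σ' y)) →
      ∀ v x y, x ∈ Ψ v → y ∈ Ψ v → σ' x (π x v) = σ' y (π y v) := by
    intro σ' hσ v x y hx hy
    suffices h : ∀ (s t : (Ψ v : Set X)) (w : (H.induce (Ψ v : Set X)).Walk s t),
        σ' s.val (π s.val v) = σ' t.val (π t.val v) by
      obtain ⟨w⟩ := (hconn v) ⟨x, by simpa using hx⟩ ⟨y, by simpa using hy⟩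
      exact h _ _ w
    intro s t w
    induction w with
    | nil => rfl
    | cons h p ih =>
      rename_i a b c
      have hab : H.Adj a.val b.val := h
      have h1 := (hσ a.val b.val hab).1 v (by simpa using a.2) (by simpa using b.2)
      exact h1.trans ih
  refine ⟨{
    toFun := fun σ => ⟨fun x i => if h : i.val < (Vx Ψ x).card then σ.val (ρ x i) else α, ?_, ?_⟩
    invFun := fun σ' => ⟨fun v => σ'.val ((hne v).choose) (π ((hne v).choose) v), ?_⟩
    left_inv := ?_
    right_inv := ?_ }⟩
  · intro x y hxy
    have ev : ∀ z v, z ∈ Ψ v →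
        (if _ : ((π z v) : ℕ) < (Vx Ψ z).card then σ.val (ρ z (π z v)) else α) = σ.val v := by
      intro z v hv
      rw [dif_pos (hπlt z v hv), hπρ z v hv]
    refine ⟨fun v hx hy => ?_, fun u v huv hu hv => ?_, fun u u' huv hu hv => ?_,
      fun u u' huv hu hv => ?_⟩ <;> simp only at * <;>
      rw [ev _ _ ‹_›, ev _ _ ‹_›]
    · exact σ.2 _ _ huv
    · exact σ.2 _ _ huv
    · exact σ.2 _ _ huv
  · intro x i hi
    simp [Nat.not_lt.mpr hi]
  · obtain ⟨σ', hσ, hpad⟩ := σ'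
    intro u w huw
    simp only
    have hu' := (hne u).choose_spec
    have hw' := (hne w).choose_spec
    rcases htouch u w huw with ⟨z, hz⟩ | ⟨a, ha, b, hb, hab⟩
    · simp only [Set.mem_inter_iff, Finset.mem_coe] at hz
      obtain ⟨y, hy⟩ := hiso z
      have h3 := (hσ z y hy).2.2.1 u w huw hz.1 hz.2
      rw [key σ' hσ u _ _ hu' hz.1, key σ' hσ w _ _ hw' hz.2]
      exact h3
    · have h2 := (hσ a b hab).2.1 u w huw ha hb
      rw [key σ' hσ u _ _ hu' ha, key σ' hσ w _ _ hw' hb]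
      exact h2
  · rintro ⟨σ, hσ⟩
    ext v
    have hv := (hne v).choose_spec
    simp only [dif_pos (hπlt _ v hv), hπρ _ v hv]
  · rintro ⟨σ', hσ, hpad⟩
    ext x i
    simp only
    by_cases hi : i.val < (Vx Ψ x).card
    · have hx := (hρ x i hi).1
      have hpi := (hρ x i hi).2
      rw [dif_pos hi,
        key σ' hσ (ρ x i) ((hne (ρ x i)).choose) x (hne (ρ x i)).choose_spec hx, hpi]
    · rw [dif_neg hi]
      exact (hpad x i (Nat.not_lt.mp hi)).symm
end
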